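/- Let $X$ be a hereditarily Baire topological space (every closed subspace of $X$ is a Baire space), $Y$ a topological space, and $f : X \to Y$ a $\sigma$-regular map. Then $f$ is barely continuous: for every nonempty closed $F \subseteq X$ the set of continuity points of $f|_F$ is dense in $F$. -/

import Mathlib

universe u

open Filter Topology Set

/-- A regular transfinite sequence of open sets on `[0, α]`. -/
def IsRegularSeq {X : Type*} [TopologicalSpace X]
    (α : Ordinal) (U : Ordinal → Set X) : Prop :=
  (∀ ξ, IsOpen (U ξ)) ∧ U 0 = ∅ ∧
  (∀ ξ η, ξ ≤ η → U ξ ⊆ U η) ∧ U α = Set.univ ∧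
  ∀ γ < α, Order.IsSuccLimit γ → U γ = ⋃ ξ : Set.Iio γ, U ξ.val

/-- The regular partition associated with a regular sequence. -/
def regularPieces {X : Type*} [TopologicalSpace X]
    (α : Ordinal) (U : Ordinal → Set X) : Set (Set X) :=
  { S | ∃ ξ < α, S = U (ξ + 1) \ U ξ }

/-- A family `𝓑` is a base for `f`. -/
def IsBaseFor {X Y : Type*} [TopologicalSpace X] [TopologicalSpace Y]
    (f : X → Y) (𝓑 : Set (Set X)) : Prop :=
  ∀ V : Set Y, IsOpen V → ∃ S ⊆ 𝓑, f ⁻¹' V = ⋃₀ S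

/-- `f` is σ-regular: a countable union of regular partitions is a base for `f`. -/
def SigmaRegular {X : Type u} {Y : Type*} [TopologicalSpace X] [TopologicalSpace Y]
    (f : X → Y) : Prop :=
  ∃ (a : ℕ → Ordinal.{u}) (U : ℕ → Ordinal.{u} → Set X),
    (∀ n, IsRegularSeq (a n) (U n)) ∧
    IsBaseFor f (⋃ n, regularPieces (a n) (U n))

/-- Two pieces containing a common point coincide. -/
lemma piece_unique {X : Type*} {U : Ordinal → Set X}
    (hmono : ∀ ξ η, ξ ≤ η → U ξ ⊆ U η) {ξ η : Ordinal} {x : X}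
    (hx1 : x ∈ U (ξ + 1) \ U ξ) (hx2 : x ∈ U (η + 1) \ U η) : ξ = η := by
  by_contra hne
  rcases lt_or_gt_of_ne hne with h | h
  · exact hx2.2 (hmono _ _ (by rw [Ordinal.add_one_eq_succ]; exact Order.succ_le_of_lt h) hx1.1)
  · exact hx1.2 (hmono _ _ (by rw [Ordinal.add_one_eq_succ]; exact Order.succ_le_of_lt h) hx2.1)

theorem sigmaRegular_barelyContinuous
    {X Y : Type*} [TopologicalSpace X] [TopologicalSpace Y]
    (hX : ∀ F : Set X, IsClosed F → BaireSpace F)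
    (f : X → Y) (hf : SigmaRegular f) :
    ∀ F : Set X, IsClosed F → F.Nonempty →
      ∀ x ∈ F, ∀ U ∈ 𝓝[F] x, ∃ y ∈ U ∩ F, ContinuousWithinAt f F y := by
  intro F hFc _hFne x hxF U hU
  obtain ⟨a, Us, hreg, hbase⟩ := hf
  haveI : BaireSpace F := hX F hFc
  set ι : F → X := Subtype.val with hι
  have hιcont : Continuous ι := continuous_subtype_val
  -- the "good" sets
  let P : ℕ → Set F := fun n =>
    {z | ∀ ξ < a n, ι z ∈ Us n (ξ + 1) \ Us n ξ →
        ι ⁻¹' (Us n (ξ + 1) \ Us n ξ) ∈ 𝓝 z}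
  have hPdense : ∀ n, Dense (interior (P n)) := by
    intro n
    obtain ⟨hopen, h0, hmono, htop, hlim⟩ := hreg n
    rw [dense_iff_inter_open]
    intro O hO hOne
    -- minimal ordinal whose preimage meets O
    set s : Set Ordinal := {ξ | (O ∩ ι ⁻¹' Us n ξ).Nonempty} with hs
    have hatop : a n ∈ s := by
      refine hOne.mono ?_
      intro z hz
      exact ⟨hz, by simp [htop]⟩
    obtain ⟨m, hm, hmin⟩ := wellFounded_lt.has_min s ⟨_, hatop⟩
    have hma : m ≤ a n := le_of_not_gt (hmin _ hatop)
    rcases Ordinal.zero_or_succ_or_isSuccLimit m with h0' | ⟨η, hη⟩ | hlim'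
    · exfalso
      obtain ⟨z, _, hz2⟩ := hm
      rw [h0', h0] at hz2
      exact hz2
    · -- successor case
      have hη1 : m = η + 1 := by rw [← hη, Ordinal.add_one_eq_succ]
      have hηm : η < m := by rw [← hη]; exact Order.lt_succ η
      have hηa : η < a n := lt_of_lt_of_le hηm hma
      have hηnot : ¬ (O ∩ ι ⁻¹' Us n η).Nonempty := fun h => hmin _ h hηm
      set W : Set F := O ∩ ι ⁻¹' Us n (η + 1) with hW
      have hWopen : IsOpen W := hO.inter ((hopen _).preimage hιcont)
      have hWne : W.Nonempty := by rw [hW, ← hη1]; exact hm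
      have hWnotη : ∀ z ∈ W, ι z ∉ Us n η := by
        intro z hz hmem
        exact hηnot ⟨z, hz.1, hmem⟩
      have hWP : W ⊆ P n := by
        intro z hz ξ hξ hzpiece
        have hzη : ι z ∈ Us n (η + 1) \ Us n η := ⟨hz.2, hWnotη z hz⟩
        have : ξ = η := piece_unique hmono hzpiece hzη
        subst this
        refine Filter.mem_of_superset (hWopen.mem_nhds hz) ?_
        intro w hw
        exact ⟨hw.2, hWnotη w hw⟩
      exact ⟨hWne.choose, hWne.choose_spec.1, interior_maximal hWP hWopen hWne.choose_spec⟩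
    · -- limit case
      rcases lt_or_eq_of_le hma with hlt | heq
      · exfalso
        obtain ⟨z, hz1, hz2⟩ := hm
        rw [hlim m hlt hlim'] at hz2
        simp only [mem_preimage, mem_iUnion] at hz2
        obtain ⟨⟨ξ, hξm⟩, hzξ⟩ := hz2
        exact hmin ξ ⟨z, hz1, hzξ⟩ hξm
      · -- m = a n : O meets no piece
        have hOP : O ⊆ P n := by
          intro z hz ξ hξ hzpiece
          exfalso
          have h1 : ξ + 1 ∈ s := ⟨z, hz, hzpiece.1⟩
          have h2 : ξ + 1 < m := by
            rw [heq, Ordinal.add_one_eq_succ]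
            exact (heq ▸ hlim' : Order.IsSuccLimit (a n)).succ_lt hξ
          exact hmin _ h1 h2
        obtain ⟨z, hz⟩ := hOne
        exact ⟨z, hz, interior_maximal hOP hO hz⟩
  have hGdense : Dense (⋂ n, interior (P n)) :=
    dense_iInter_of_isOpen (fun n => isOpen_interior) hPdense
  -- find a good point near x inside U
  set x' : F := ⟨x, hxF⟩ with hx'
  have hUmem : ι ⁻¹' U ∈ 𝓝 x' := by
    rw [← map_nhds_subtype_val x'] at hU
    exact hU
  obtain ⟨O, hOU, hOopen, hxO⟩ := mem_nhds_iff.1 hUmem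
  obtain ⟨y', hy'⟩ := (dense_iff_inter_open.1 hGdense) O hOopen ⟨x', hxO⟩
  refine ⟨ι y', ⟨hOU hy'.1, y'.2⟩, ?_⟩
  -- continuity at y'
  rw [ContinuousWithinAt, tendsto_nhds]
  intro W hWopen hfyW
  obtain ⟨S, hS, hpre⟩ := hbase W hWopen
  have hymem : ι y' ∈ ⋃₀ S := by rw [← hpre]; exact hfyW
  obtain ⟨Pc, hPcS, hyPc⟩ := hymem
  have hmem := hS hPcS
  rw [mem_iUnion] at hmem
  obtain ⟨n, hn⟩ := hmem
  obtain ⟨ξ, hξ, rfl⟩ := hn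
  have hyP : y' ∈ P n := interior_subset (mem_iInter.1 hy'.2 n)
  have hnb : ι ⁻¹' (Us n (ξ + 1) \ Us n ξ) ∈ 𝓝 y' := hyP ξ hξ hyPc
  have hnb' : (Us n (ξ + 1) \ Us n ξ) ∈ 𝓝[F] (ι y') := by
    rw [← map_nhds_subtype_val y', mem_map]
    exact hnb
  refine Filter.mem_of_superset hnb' ?_
  rw [hpre]
  exact fun w hw => ⟨_, hPcS, hw⟩
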